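/- Let P be a nonzero homogeneous polynomial of degree γ in d variables over ℂ, and let L_* = P(∂) be the associated constant-coefficient homogeneous differential operator of order γ. Then for every n ∈ ℕ_0, the linear map L_* : P̃_{n+γ} → P̃_n between spaces of homogeneous polynomials of degrees n+γ and n is surjective. -/

import Mathlib

open MvPolynomial

/-- The iterated partial derivative operator `∂^i = ∂_{x_1}^{i_1} ⋯ ∂_{x_d}^{i_d}`
on multivariate polynomials. -/
noncomputable def partialD {R : Type*} [CommSemiring R] {d : ℕ} (i : Fin d →₀ ℕ) :
    Module.End R (MvPolynomial (Fin d) R) :=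
  (List.ofFn fun g : Fin d =>
    ((pderiv g : Derivation R _ _).toLinearMap : Module.End R (MvPolynomial (Fin d) R)) ^ i g).prod

/-- `P(∂)Q`: the differential operator associated to `P` applied to `Q`. -/
noncomputable def applyDiff {d : ℕ} (P Q : MvPolynomial (Fin d) ℂ) : MvPolynomial (Fin d) ℂ :=
  ∑ i ∈ P.support, P.coeff i • partialD i Q

/-- Coefficient-wise complex conjugation of a polynomial. -/
noncomputable def conjP {d : ℕ} (Q : MvPolynomial (Fin d) ℂ) : MvPolynomial (Fin d) ℂ :=
  Q.map (starRingEnd ℂ)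

/-- The pairing `⟨P,Q⟩ := (P(∂)Q̄)(0)`. -/
noncomputable def qpair {d : ℕ} (P Q : MvPolynomial (Fin d) ℂ) : ℂ :=
  MvPolynomial.eval 0 (applyDiff P (conjP Q))

namespace Aux11

/-- generic: product of commuting powers is additive in the exponents -/
theorem prod_ofFn_pow_add {M : Type*} [Monoid M] : ∀ {m : ℕ} (f : Fin m → M),
    (∀ a b, Commute (f a) (f b)) → ∀ (i j : Fin m → ℕ),
    (List.ofFn fun g => f g ^ (i g + j g)).prod
      = (List.ofFn fun g => f g ^ i g).prod * (List.ofFn fun g => f g ^ j g).prod := by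
  intro m
  induction m with
  | zero => intro f hc i j; simp
  | succ m ih =>
    intro f hc i j
    have key : ∀ (k : ℕ) (i' : Fin m → ℕ),
        Commute (f 0 ^ k) (List.ofFn fun g : Fin m => f g.succ ^ i' g).prod := by
      intro k i'
      apply Commute.list_prod_right
      intro y hy
      rw [List.mem_ofFn] at hy
      obtain ⟨g, rfl⟩ := hy
      exact (hc 0 g.succ).pow_pow _ _
    simp only [List.ofFn_succ, List.prod_cons]
    rw [ih (fun g => f g.succ) (fun a b => hc _ _) (fun g => i g.succ) (fun g => j g.succ),
      pow_add, mul_assoc, ← mul_assoc (f 0 ^ j 0), (key (j 0) _).eq, mul_assoc, ← mul_assoc]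

theorem prod_ofFn_pow_ite {M : Type*} [Monoid M] : ∀ {m : ℕ} (f : Fin m → M) (g : Fin m) (k : ℕ),
    (List.ofFn fun h => f h ^ (if h = g then k else 0)).prod = f g ^ k := by
  intro m
  induction m with
  | zero => exact fun f g k => g.elim0
  | succ m ih =>
    intro f g k
    simp only [List.ofFn_succ, List.prod_cons]
    cases g using Fin.cases with
    | zero =>
      simp only [if_pos rfl]
      have : (List.ofFn fun h : Fin m => f h.succ ^ (if h.succ = (0 : Fin (m+1)) then k else 0)).prod = 1 := by
        apply List.prod_eq_one
        intro x hx
        rw [List.mem_ofFn] at hx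
        obtain ⟨h, rfl⟩ := hx
        simp [Fin.succ_ne_zero]
      rw [this, mul_one]; simp
    | succ g' =>
      have h0 : ((0 : Fin (m+1)) = g'.succ) = False := by
        simp [(Fin.succ_ne_zero g').symm]
      simp only [h0, if_false, pow_zero, one_mul]
      have : (fun h : Fin m => f h.succ ^ (if h.succ = g'.succ then k else 0))
           = (fun h : Fin m => f h.succ ^ (if h = g' then k else 0)) := by
        funext h
        simp [Fin.succ_inj]
      rw [this, ih]


noncomputable def pdE (g : Fin d) : Module.End ℂ (MvPolynomial (Fin d) ℂ) :=
  ((pderiv g : Derivation ℂ _ _).toLinearMap : Module.End ℂ (MvPolynomial (Fin d) ℂ))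

@[simp] theorem pdE_apply (g : Fin d) (p : MvPolynomial (Fin d) ℂ) : pdE g p = pderiv g p := rfl

theorem pderiv_comm (a b : Fin d) (p : MvPolynomial (Fin d) ℂ) :
    pderiv a (pderiv b p) = pderiv b (pderiv a p) := by
  induction p using MvPolynomial.induction_on' with
  | monomial s c =>
    rcases eq_or_ne a b with rfl | hab
    · rfl
    · simp only [pderiv_monomial]
      rw [tsub_tsub, tsub_tsub, add_comm (Finsupp.single b 1)]
      congr 1
      rw [Finsupp.tsub_apply, Finsupp.tsub_apply,
        Finsupp.single_eq_of_ne hab, Finsupp.single_eq_of_ne (Ne.symm hab)]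
      simp only [tsub_zero]
      push_cast
      ring
  | add p q hp hq => simp [hp, hq]

theorem pdE_commute (a b : Fin d) : Commute (pdE a) (pdE b) :=
  LinearMap.ext fun p => pderiv_comm a b p


theorem partialD_def (i : Fin d →₀ ℕ) :
    (partialD i : Module.End ℂ (MvPolynomial (Fin d) ℂ))
      = (List.ofFn fun g => pdE g ^ i g).prod := rfl

theorem partialD_zero : (partialD (0 : Fin d →₀ ℕ) : Module.End ℂ (MvPolynomial (Fin d) ℂ)) = 1 := by
  rw [partialD_def]
  apply List.prod_eq_one
  intro x hx
  rw [List.mem_ofFn] at hx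
  obtain ⟨g, rfl⟩ := hx
  simp

theorem partialD_add (i j : Fin d →₀ ℕ) :
    (partialD (i + j) : Module.End ℂ (MvPolynomial (Fin d) ℂ)) = partialD i * partialD j := by
  rw [partialD_def, partialD_def, partialD_def, ← prod_ofFn_pow_add pdE pdE_commute]
  simp [Finsupp.add_apply]

theorem partialD_single (g : Fin d) (k : ℕ) :
    (partialD (Finsupp.single g k) : Module.End ℂ (MvPolynomial (Fin d) ℂ)) = pdE g ^ k := by
  rw [partialD_def, ← prod_ofFn_pow_ite pdE g k]
  refine congrArg List.prod ?_
  rw [List.ofFn_inj]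
  funext h
  congr 1
  rw [Finsupp.single_apply]
  simp [eq_comm]

theorem nat_desc_aux (m k : ℕ) : m * (m - 1).descFactorial k = m.descFactorial (k + 1) := by
  cases m with
  | zero => simp
  | succ m => simpa using (Nat.succ_descFactorial_succ m k).symm

theorem pdE_pow_monomial (g : Fin d) (k : ℕ) (j : Fin d →₀ ℕ) (c : ℂ) :
    (pdE g ^ k) (monomial j c)
      = monomial (j - Finsupp.single g k) (c * ((j g).descFactorial k : ℕ)) := by
  induction k with
  | zero => simp
  | succ k ih =>
    rw [pow_succ', Module.End.mul_apply, pdE_apply, ih, pderiv_monomial]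
    have he : j - Finsupp.single g k - Finsupp.single g 1 = j - Finsupp.single g (k + 1) := by
      rw [tsub_tsub, ← Finsupp.single_add]
    have hc : (j - Finsupp.single g k) g = j g - k := by
      rw [Finsupp.tsub_apply, Finsupp.single_eq_same]
    rw [he, hc]
    congr 1
    rw [mul_assoc, ← Nat.cast_mul, mul_comm ((j g).descFactorial k), ← Nat.descFactorial_succ]

theorem partialD_monomial (i j : Fin d →₀ ℕ) (c : ℂ) :
    partialD i (monomial j c)
      = monomial (j - i) (c * ((∏ g, (j g).descFactorial (i g) : ℕ) : ℂ)) := by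
  induction i using Finsupp.induction with
  | zero => rw [partialD_zero]; simp
  | single_add g k rest hgr hk ih =>
    rw [partialD_add, Module.End.mul_apply, ih, partialD_single, pdE_pow_monomial]
    have hrg : rest g = 0 := Finsupp.notMem_support_iff.mp hgr
    have he : j - rest - Finsupp.single g k = j - (Finsupp.single g k + rest) := by
      rw [tsub_tsub, add_comm]
    have hjr : (j - rest) g = j g := by
      rw [Finsupp.tsub_apply, hrg, tsub_zero]
    rw [he, hjr]
    congr 1
    rw [mul_assoc, ← Nat.cast_mul]
    congr 2
    have hsplit : ∀ h : Fin d, (j h).descFactorial ((Finsupp.single g k + rest) h)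
        = (j h).descFactorial (rest h) * (j h).descFactorial (Finsupp.single g k h) := by
      intro h
      rcases eq_or_ne h g with rfl | hh
      · rw [Finsupp.add_apply, Finsupp.single_eq_same, hrg, add_zero,
          Nat.descFactorial_zero, one_mul]
      · rw [Finsupp.add_apply, Finsupp.single_eq_of_ne hh, zero_add,
          Nat.descFactorial_zero, mul_one]
    rw [Finset.prod_congr rfl (fun h _ => hsplit h), Finset.prod_mul_distrib]
    congr 1
    rw [Finset.prod_eq_single g (fun b _ hb => by
      rw [Finsupp.single_eq_of_ne hb, Nat.descFactorial_zero]) (fun hg => absurd (Finset.mem_univ g) hg)]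
    rw [Finsupp.single_eq_same]


/-- `P(∂)` as an algebra morphism. -/
noncomputable def Dop (d : ℕ) : MvPolynomial (Fin d) ℂ →ₐ[ℂ] Module.End ℂ (MvPolynomial (Fin d) ℂ) :=
  AddMonoidAlgebra.lift ℂ _ ((Fin d) →₀ ℕ)
    { toFun := fun i => partialD (Multiplicative.toAdd i)
      map_one' := partialD_zero
      map_mul' := fun i j => partialD_add _ _ }

theorem applyDiff_eq_Dop (P Q : MvPolynomial (Fin d) ℂ) : applyDiff P Q = Dop d P Q := by
  have h : Dop d P = (AddMonoidAlgebra.coeff P).sum fun a b => b • partialD a := AddMonoidAlgebra.lift_apply _ P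
  rw [h, applyDiff, Finsupp.sum, LinearMap.coe_sum, Finset.sum_apply]
  rfl

theorem applyDiff_mul (P Q R : MvPolynomial (Fin d) ℂ) :
    applyDiff (P * Q) R = applyDiff P (applyDiff Q R) := by
  simp [applyDiff_eq_Dop, map_mul, Module.End.mul_apply]

theorem applyDiff_zero (P : MvPolynomial (Fin d) ℂ) : applyDiff P 0 = 0 := by
  rw [applyDiff_eq_Dop]; exact map_zero _


theorem conjP_smul (c : ℂ) (p : MvPolynomial (Fin d) ℂ) :
    conjP (c • p) = (starRingEnd ℂ) c • conjP p := by
  rw [conjP, conjP, smul_eq_C_mul, smul_eq_C_mul, map_mul, map_C]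

theorem conjP_pdE_pow (g : Fin d) (k : ℕ) (Q : MvPolynomial (Fin d) ℂ) :
    conjP ((pdE g ^ k) Q) = (pdE g ^ k) (conjP Q) := by
  induction k generalizing Q with
  | zero => simp
  | succ k ih =>
    rw [pow_succ, Module.End.mul_apply, Module.End.mul_apply, pdE_apply, pdE_apply, ih,
      conjP, conjP, pderiv_map]

theorem conjP_partialD (i : Fin d →₀ ℕ) (Q : MvPolynomial (Fin d) ℂ) :
    conjP (partialD i Q) = partialD i (conjP Q) := by
  induction i using Finsupp.induction generalizing Q with
  | zero => rw [partialD_zero]; rfl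
  | single_add g k rest hgr hk ih =>
    rw [partialD_add, Module.End.mul_apply, Module.End.mul_apply, partialD_single,
      conjP_pdE_pow, ih]

theorem support_conjP (P : MvPolynomial (Fin d) ℂ) : (conjP P).support = P.support :=
  MvPolynomial.support_map_of_injective _ (RingHom.injective _)

theorem coeff_conjP (P : MvPolynomial (Fin d) ℂ) (i : Fin d →₀ ℕ) :
    (conjP P).coeff i = (starRingEnd ℂ) (P.coeff i) := coeff_map _ _ _

theorem conjP_conjP (Q : MvPolynomial (Fin d) ℂ) : conjP (conjP Q) = Q := by
  rw [conjP, conjP, map_map]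
  convert map_id Q
  ext1 z
  exact Complex.conj_conj z

theorem conjP_applyDiff (P Q : MvPolynomial (Fin d) ℂ) :
    conjP (applyDiff P Q) = applyDiff (conjP P) (conjP Q) := by
  rw [applyDiff, applyDiff, support_conjP]
  rw [show conjP (∑ i ∈ P.support, P.coeff i • partialD i Q)
      = ∑ i ∈ P.support, conjP (P.coeff i • partialD i Q) from map_sum (MvPolynomial.map _) _ _]
  refine Finset.sum_congr rfl fun i _ => ?_
  rw [conjP_smul, conjP_partialD, coeff_conjP]

theorem conjP_eq_zero_iff (P : MvPolynomial (Fin d) ℂ) : conjP P = 0 ↔ P = 0 := by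
  constructor
  · intro h
    have := congrArg conjP h
    rwa [conjP_conjP, show conjP (0 : MvPolynomial (Fin d) ℂ) = 0 from map_zero (MvPolynomial.map _)] at this
  · rintro rfl; exact map_zero (MvPolynomial.map _)

theorem eval0_partialD_monomial (i j : Fin d →₀ ℕ) (c : ℂ) :
    MvPolynomial.eval (0 : Fin d → ℂ) (partialD i (monomial j c))
      = if j = i then c * ((∏ g, (i g).factorial : ℕ) : ℂ) else 0 := by
  classical
  rw [partialD_monomial, eval_zero, constantCoeff_monomial]
  rcases eq_or_ne j i with rfl | hij
  · simp [Nat.descFactorial_self]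
  · rw [if_neg hij]
    by_cases hle : i ≤ j
    · rw [if_neg (by
        intro h
        exact hij (le_antisymm (tsub_eq_zero_iff_le.mp h) hle))]
    · have : ∃ g, j g < i g := by
        by_contra hc
        push_neg at hc
        exact hle (Finsupp.le_def.mpr fun g => hc g)
      obtain ⟨g, hg⟩ := this
      have hz : (∏ g, (j g).descFactorial (i g) : ℕ) = 0 :=
        Finset.prod_eq_zero (Finset.mem_univ g) (Nat.descFactorial_eq_zero_iff_lt.mpr hg)
      rw [hz]
      simp

theorem qpair_self (Q : MvPolynomial (Fin d) ℂ) :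
    qpair Q Q = ∑ i ∈ Q.support,
      ((Complex.normSq (Q.coeff i) : ℝ) : ℂ) * ((∏ g, (i g).factorial : ℕ) : ℂ) := by
  rw [qpair, applyDiff, map_sum]
  refine Finset.sum_congr rfl fun i hi => ?_
  rw [smul_eq_C_mul, map_mul, eval_C]
  have hQ : conjP Q = ∑ j ∈ Q.support, monomial j ((starRingEnd ℂ) (Q.coeff j)) := by
    conv_lhs => rw [← support_sum_monomial_coeff (conjP Q)]
    rw [support_conjP]
    exact Finset.sum_congr rfl fun j _ => by rw [coeff_conjP]
  rw [hQ, map_sum, map_sum]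
  rw [Finset.sum_congr rfl fun j _ => eval0_partialD_monomial i j _]
  rw [Finset.sum_ite_eq' Q.support i fun j => (starRingEnd ℂ) (Q.coeff j) * _]
  rw [if_pos hi, ← mul_assoc, Complex.mul_conj]

theorem qpair_self_eq_zero {Q : MvPolynomial (Fin d) ℂ} (h : qpair Q Q = 0) : Q = 0 := by
  rw [qpair_self] at h
  have h' : ∑ i ∈ Q.support, Complex.normSq (Q.coeff i) * ((∏ g, (i g).factorial : ℕ) : ℝ) = 0 := by
    have := h
    rw [show (∑ i ∈ Q.support,
        ((Complex.normSq (Q.coeff i) : ℝ) : ℂ) * ((∏ g, (i g).factorial : ℕ) : ℂ))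
      = ((∑ i ∈ Q.support, Complex.normSq (Q.coeff i) * ((∏ g, (i g).factorial : ℕ) : ℝ) : ℝ) : ℂ) by
        push_cast; ring_nf] at this
    exact_mod_cast this
  have hnn : ∀ i ∈ Q.support, 0 ≤ Complex.normSq (Q.coeff i) * ((∏ g, (i g).factorial : ℕ) : ℝ) :=
    fun i _ => mul_nonneg (Complex.normSq_nonneg _) (Nat.cast_nonneg _)
  have hz := (Finset.sum_eq_zero_iff_of_nonneg hnn).mp h'
  rw [← support_eq_empty, Finset.eq_empty_iff_forall_notMem]
  intro i hi
  have := hz i hi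
  have hfac : (0 : ℝ) < ((∏ g, (i g).factorial : ℕ) : ℝ) := by
    have : 0 < ∏ g, (i g).factorial := Finset.prod_pos fun g _ => (i g).factorial_pos
    exact_mod_cast this
  have : Complex.normSq (Q.coeff i) = 0 := by
    rcases mul_eq_zero.mp this with h | h
    · exact h
    · exact absurd h (ne_of_gt hfac)
  exact mem_support_iff.mp hi (Complex.normSq_eq_zero.mp this)


theorem applyDiff_isHomogeneous {P Q : MvPolynomial (Fin d) ℂ} {γ n : ℕ}
    (hP : P.IsHomogeneous γ) (hQ : Q.IsHomogeneous (n + γ)) :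
    (applyDiff P Q).IsHomogeneous n := by
  rw [applyDiff]
  apply IsHomogeneous.sum
  intro i hi
  have hQs : Q = ∑ j ∈ Q.support, monomial j (Q.coeff j) := (support_sum_monomial_coeff Q).symm
  rw [show partialD i Q = ∑ j ∈ Q.support, partialD i (monomial j (Q.coeff j)) by
    conv_lhs => rw [hQs]
    exact map_sum (partialD i) _ _]
  rw [Finset.smul_sum]
  apply IsHomogeneous.sum
  intro j hj
  rw [partialD_monomial, smul_monomial]
  by_cases hc : P.coeff i • (Q.coeff j * ((∏ g, (j g).descFactorial (i g) : ℕ) : ℂ)) = 0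
  · rw [hc, monomial_zero]
    exact isHomogeneous_zero _ _ _
  · apply isHomogeneous_monomial
    have hP0 : P.coeff i ≠ 0 := mem_support_iff.mp hi
    have hQ0 : Q.coeff j ≠ 0 := mem_support_iff.mp hj
    have hD0 : ((∏ g, (j g).descFactorial (i g) : ℕ) : ℂ) ≠ 0 := by
      intro h
      apply hc
      rw [h, mul_zero, smul_zero]
    have hle : i ≤ j := by
      rw [Finsupp.le_def]
      intro g
      by_contra hg
      push_neg at hg
      apply hD0
      rw [show (∏ g, (j g).descFactorial (i g) : ℕ) = 0 from
        Finset.prod_eq_zero (Finset.mem_univ g) (Nat.descFactorial_eq_zero_iff_lt.mpr hg)]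
      simp
    have hdi : (Finsupp.degree i) = γ := by
      rw [Finsupp.degree_eq_weight_one]
      exact hP hP0
    have hdj : (Finsupp.degree j) = n + γ := by
      rw [Finsupp.degree_eq_weight_one]
      exact hQ hQ0
    have hadd : Finsupp.degree (j - i) + Finsupp.degree i = Finsupp.degree j := by
      rw [Finsupp.degree_eq_weight_one, ← map_add, tsub_add_cancel_of_le hle]
    rw [hdi, hdj] at hadd
    exact Nat.add_right_cancel hadd

theorem stmt_11 (d γ : ℕ) (P : MvPolynomial (Fin d) ℂ) (hP : P ≠ 0)
    (hhom : P.IsHomogeneous γ) (n : ℕ) :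
    ∀ Λ : MvPolynomial (Fin d) ℂ, Λ.IsHomogeneous n →
      ∃ Pi : MvPolynomial (Fin d) ℂ, Pi.IsHomogeneous (n + γ) ∧ applyDiff P Pi = Λ := by
  classical
  have hcP : conjP P ≠ 0 := fun h => hP ((conjP_eq_zero_iff P).mp h)
  have hcPhom : (conjP P).IsHomogeneous γ := hhom.map _
  -- the auxiliary endomorphism of the space of homogeneous polys of degree n
  set K := homogeneousSubmodule (Fin d) ℂ n with hK
  haveI : FiniteDimensional ℂ K := by
    apply Submodule.finiteDimensional_of_le (S₂ := restrictTotalDegree (Fin d) ℂ n)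
    intro p hp
    rw [mem_restrictTotalDegree]
    exact IsHomogeneous.totalDegree_le hp
  have hmem : ∀ x : MvPolynomial (Fin d) ℂ, x ∈ K → applyDiff P (conjP P * x) ∈ K := by
    intro x hx
    rw [hK, mem_homogeneousSubmodule]
    apply applyDiff_isHomogeneous hhom
    rw [add_comm]
    exact hcPhom.mul hx
  let F : MvPolynomial (Fin d) ℂ →ₗ[ℂ] MvPolynomial (Fin d) ℂ :=
    { toFun := fun x => applyDiff P (conjP P * x)
      map_add' := fun a b => by
        show applyDiff P (conjP P * (a + b))
          = applyDiff P (conjP P * a) + applyDiff P (conjP P * b)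
        rw [mul_add, applyDiff_eq_Dop, map_add, ← applyDiff_eq_Dop, ← applyDiff_eq_Dop]
      map_smul' := fun c a => by
        show applyDiff P (conjP P * (c • a)) = c • applyDiff P (conjP P * a)
        rw [mul_smul_comm, applyDiff_eq_Dop, map_smul, ← applyDiff_eq_Dop] }
  let T : K →ₗ[ℂ] K := F.restrict hmem
  have hinj : Function.Injective T := by
    rw [injective_iff_map_eq_zero]
    intro x hx
    have hx0 : applyDiff P ((x : MvPolynomial (Fin d) ℂ) * conjP P) = 0 := by
      rw [mul_comm]
      exact congrArg (Subtype.val) hx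
    have hczero : conjP (0 : MvPolynomial (Fin d) ℂ) = 0 := map_zero (MvPolynomial.map _)
    have h1 : applyDiff (conjP P) (conjP ((x : MvPolynomial (Fin d) ℂ) * conjP P)) = 0 := by
      rw [← conjP_applyDiff, hx0, hczero]
    have h2 : applyDiff ((x : MvPolynomial (Fin d) ℂ) * conjP P)
        (conjP ((x : MvPolynomial (Fin d) ℂ) * conjP P)) = 0 := by
      rw [applyDiff_mul, h1, applyDiff_zero]
    have hq : qpair ((x : MvPolynomial (Fin d) ℂ) * conjP P)
        ((x : MvPolynomial (Fin d) ℂ) * conjP P) = 0 := by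
      rw [qpair, h2]
      exact map_zero _
    have hS0 := qpair_self_eq_zero hq
    have : (x : MvPolynomial (Fin d) ℂ) = 0 := by
      rcases mul_eq_zero.mp hS0 with h | h
      · exact h
      · exact absurd h hcP
    exact Subtype.ext this
  have hsurj : Function.Surjective T := LinearMap.injective_iff_surjective.mp hinj
  intro Λ hΛ
  obtain ⟨M, hM⟩ := hsurj ⟨Λ, hΛ⟩
  refine ⟨conjP P * (M : MvPolynomial (Fin d) ℂ), ?_, ?_⟩
  · rw [add_comm]
    exact hcPhom.mul M.2
  · exact congrArg Subtype.val hM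

end Aux11

/-- For any nonzero homogeneous polynomial `P` of degree `γ`, the constant-coefficient
homogeneous differential operator `L_* = P(∂)` maps the homogeneous polynomials of
degree `n+γ` onto those of degree `n`, for every `n`. -/
theorem stmt_11 (d γ : ℕ) (P : MvPolynomial (Fin d) ℂ) (hP : P ≠ 0)
    (hhom : P.IsHomogeneous γ) (n : ℕ) :
    ∀ Λ : MvPolynomial (Fin d) ℂ, Λ.IsHomogeneous n →
      ∃ Pi : MvPolynomial (Fin d) ℂ, Pi.IsHomogeneous (n + γ) ∧ applyDiff P Pi = Λ :=
  Aux11.stmt_11 d γ P hP hhom n
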